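/- Let d ≥ 1 and let f : ℝ → ℝ^d be a continuously differentiable map which is injective and satisfies f′(t) ≠ 0 for every t ∈ ℝ. Then for every t ∈ ℝ and every a > 0 one has f(t+a) ≠ f(t−a), and the map H : [0,∞) × ℝ → ℝ^d defined by H(a,t) = (f(t+a) − f(t−a))/‖f(t+a) − f(t−a)‖ for a > 0, and H(0,t) = f′(t)/‖f′(t)‖, is continuous on [0,∞) × ℝ and takes values in the unit sphere of ℝ^d. -/

import Mathlib

open Set intervalIntegral

variable {E : Type*} [NormedAddCommGroup E] [NormedSpace ℝ E] [CompleteSpace E]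

lemma slope_cont (f : ℝ → E) (hf : ContDiff ℝ 1 f) :
    Continuous (fun p : ℝ × ℝ =>
      if p.1 = 0 then deriv f p.2 else (2 * p.1)⁻¹ • (f (p.2 + p.1) - f (p.2 - p.1))) := by
  have hf' : Continuous (deriv f) := hf.continuous_deriv le_rfl
  have hdiff : Differentiable ℝ f := hf.differentiable one_ne_zero
  rw [continuous_iff_continuousAt]
  rintro ⟨a, t⟩
  rcases eq_or_ne a 0 with rfl | ha
  · rw [ContinuousAt]
    simp only [if_pos rfl, if_true]
    rw [Metric.tendsto_nhds]
    intro ε hε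
    obtain ⟨δ, hδ, hδ'⟩ := Metric.continuous_iff.mp hf' t (ε/2) (half_pos hε)
    have hball : Metric.ball ((0:ℝ), t) (δ/2) ∈ nhds ((0:ℝ), t) :=
      Metric.ball_mem_nhds _ (by linarith)
    filter_upwards [hball] with p hp
    rw [dist_eq_norm]
    obtain ⟨b, s⟩ := p
    rw [Metric.mem_ball, Prod.dist_eq, max_lt_iff] at hp
    obtain ⟨hb, hs⟩ := hp
    rw [Real.dist_eq, sub_zero] at hb
    rw [Real.dist_eq] at hs
    have hb' : |b| < δ/2 := hb
    have hs' : |s - t| < δ/2 := hs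
    have hnear : ∀ u ∈ Set.uIoc (s - b) (s + b), ‖deriv f u - deriv f t‖ ≤ ε / 2 := by
      intro u hu
      rw [Set.uIoc] at hu
      have h1 : s - |b| ≤ u := le_trans (by rcases abs_cases b with ⟨h, _⟩ | ⟨h, _⟩ <;>
        simp [le_min_iff] <;> constructor <;> linarith [abs_nonneg b, neg_abs_le b, le_abs_self b])
        hu.1.le
      have h2 : u ≤ s + |b| := le_trans hu.2 (by rcases le_total (s-b) (s+b) with h | h <;>
        simp [max_le_iff] <;> constructor <;> linarith [neg_abs_le b, le_abs_self b])
      have hus : |u - s| ≤ |b| := abs_le.2 ⟨by linarith, by linarith⟩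
      have hut : |u - t| < δ :=
        calc |u - t| ≤ |u - s| + |s - t| := abs_sub_le u s t
          _ < δ := by linarith
      have := hδ' u (by rwa [Real.dist_eq])
      rw [dist_eq_norm] at this
      exact this.le
    have hbne : b ≠ 0 → ‖(2*b)⁻¹ • (f (s + b) - f (s - b)) - deriv f t‖ < ε := by
      intro hbne
      have hFTC : ∫ u in (s - b)..(s + b), deriv f u = f (s + b) - f (s - b) :=
        intervalIntegral.integral_deriv_eq_sub (fun x _ => hdiff x)
          (hf'.intervalIntegrable _ _)
      have hconst : ∫ _u in (s - b)..(s + b), deriv f t = (2*b) • deriv f t := by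
        rw [intervalIntegral.integral_const]; congr 1; ring
      have hsub : ∫ u in (s - b)..(s + b), (deriv f u - deriv f t) =
          (f (s + b) - f (s - b)) - (2*b) • deriv f t := by
        rw [intervalIntegral.integral_sub (hf'.intervalIntegrable _ _)
          (intervalIntegrable_const), hFTC, hconst]
      have hbound : ‖∫ u in (s - b)..(s + b), (deriv f u - deriv f t)‖ ≤
          ε/2 * |(s + b) - (s - b)| :=
        intervalIntegral.norm_integral_le_of_norm_le_const hnear
      have key : (2*b)⁻¹ • (f (s + b) - f (s - b)) - deriv f t =
          (2*b)⁻¹ • ∫ u in (s - b)..(s + b), (deriv f u - deriv f t) := by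
        rw [hsub]
        match_scalars <;> field_simp
      rw [key, norm_smul]
      have h2b : |(s + b) - (s - b)| = |2*b| := by congr 1; ring
      rw [h2b] at hbound
      calc ‖(2*b)⁻¹‖ * ‖∫ u in (s - b)..(s + b), (deriv f u - deriv f t)‖
          ≤ |2*b|⁻¹ * (ε/2 * |2*b|) := by
            rw [Real.norm_eq_abs, abs_inv]
            exact mul_le_mul_of_nonneg_left hbound (by positivity)
        _ = ε/2 := by field_simp
        _ < ε := by linarith
    by_cases hb0 : b = 0
    · simp only [if_pos hb0]
      calc ‖deriv f s - deriv f t‖ ≤ ε/2 := by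
            have := hδ' s (by rw [Real.dist_eq]; linarith)
            rw [dist_eq_norm] at this; linarith [this.le]
        _ < ε := by linarith
    · simp only [if_neg hb0]
      exact hbne hb0
  · have hev : ∀ᶠ p : ℝ × ℝ in nhds (a, t), p.1 ≠ 0 :=
      continuousAt_fst.eventually_ne ha
    have hcont : ContinuousAt (fun p : ℝ × ℝ =>
        (2 * p.1)⁻¹ • (f (p.2 + p.1) - f (p.2 - p.1))) (a, t) := by
      apply ContinuousAt.smul
      · exact (continuousAt_const.mul continuousAt_fst).inv₀ (by simpa using ha)
      · exact ((hf.continuous.comp (continuous_snd.add continuous_fst)).sub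
          (hf.continuous.comp (continuous_snd.sub continuous_fst))).continuousAt
    exact hcont.congr (hev.mono fun p hp => by simp [if_neg hp])

lemma normalize_smul_eq {E : Type*} [NormedAddCommGroup E] [NormedSpace ℝ E]
    {c : ℝ} (hc : 0 < c) (v : E) : ‖c • v‖⁻¹ • (c • v) = ‖v‖⁻¹ • v := by
  rcases eq_or_ne v 0 with rfl | hv
  · simp
  · rw [norm_smul, Real.norm_eq_abs, abs_of_pos hc, smul_smul]
    congr 1
    rw [mul_inv, mul_comm c⁻¹, mul_assoc, inv_mul_cancel₀ hc.ne', mul_one]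

/-- Let `d ≥ 1` and let `f : ℝ → ℝ^d` be a continuously differentiable
map which is injective and whose derivative never vanishes.  Then for every `t` and every
`a > 0` one has `f (t+a) ≠ f (t-a)`, and the map `H : [0,∞) × ℝ → ℝ^d` given by the
normalized symmetric difference quotients for `a > 0` and by the normalized derivative for
`a = 0` is continuous on `[0,∞) × ℝ` and takes values in the unit sphere.
(Key analytic step in D. Sinha's proof of Theorem 2.1 of the paper.) -/
theorem sinha_contracting_homotopy (d : ℕ) (hd : 1 ≤ d)
    (f : ℝ → EuclideanSpace ℝ (Fin d))
    (hf : ContDiff ℝ 1 f) (hinj : Function.Injective f)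
    (hf' : ∀ t : ℝ, deriv f t ≠ 0) :
    (∀ (t a : ℝ), 0 < a → f (t + a) ≠ f (t - a)) ∧
    ContinuousOn
      (fun p : ℝ × ℝ =>
        if p.1 = 0 then ‖deriv f p.2‖⁻¹ • deriv f p.2
        else ‖f (p.2 + p.1) - f (p.2 - p.1)‖⁻¹ • (f (p.2 + p.1) - f (p.2 - p.1)))
      (Set.Ici 0 ×ˢ Set.univ) ∧
    (∀ p : ℝ × ℝ, p ∈ (Set.Ici (0:ℝ)) ×ˢ (Set.univ : Set ℝ) →
      (if p.1 = 0 then ‖deriv f p.2‖⁻¹ • deriv f p.2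
       else ‖f (p.2 + p.1) - f (p.2 - p.1)‖⁻¹ • (f (p.2 + p.1) - f (p.2 - p.1)))
        ∈ Metric.sphere (0 : EuclideanSpace ℝ (Fin d)) 1) := by
  have key1 : ∀ (t a : ℝ), 0 < a → f (t + a) ≠ f (t - a) := by
    intro t a ha h
    have := hinj h
    linarith
  set g : ℝ × ℝ → EuclideanSpace ℝ (Fin d) := fun p =>
    if p.1 = 0 then deriv f p.2 else (2 * p.1)⁻¹ • (f (p.2 + p.1) - f (p.2 - p.1)) with hg
  have hgcont : Continuous g := slope_cont f hf
  have hg0 : ∀ p : ℝ × ℝ, p ∈ (Set.Ici (0:ℝ)) ×ˢ (Set.univ : Set ℝ) → g p ≠ 0 := by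
    rintro ⟨a, t⟩ ⟨ha, -⟩
    rcases eq_or_ne a 0 with rfl | hane
    · simpa [hg] using hf' t
    · have hapos : 0 < a := lt_of_le_of_ne ha (Ne.symm hane)
      simp only [hg, if_neg hane]
      exact smul_ne_zero (inv_ne_zero (by positivity))
        (sub_ne_zero.2 (key1 t a hapos))
  have heq : ∀ p : ℝ × ℝ, p ∈ (Set.Ici (0:ℝ)) ×ˢ (Set.univ : Set ℝ) →
      (if p.1 = 0 then ‖deriv f p.2‖⁻¹ • deriv f p.2
       else ‖f (p.2 + p.1) - f (p.2 - p.1)‖⁻¹ • (f (p.2 + p.1) - f (p.2 - p.1)))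
      = ‖g p‖⁻¹ • g p := by
    rintro ⟨a, t⟩ ⟨ha, -⟩
    rcases eq_or_ne a 0 with rfl | hane
    · simp [hg]
    · have hapos : 0 < a := lt_of_le_of_ne ha (Ne.symm hane)
      simp only [hg, if_neg hane]
      exact (normalize_smul_eq (by positivity) _).symm
  refine ⟨key1, ?_, ?_⟩
  · apply ContinuousOn.congr (f := fun p => ‖g p‖⁻¹ • g p) _ heq
    intro p hp
    exact (((hgcont.continuousAt.norm.inv₀
      (norm_ne_zero_iff.2 (hg0 p hp))).smul hgcont.continuousAt)).continuousWithinAt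
  · intro p hp
    rw [heq p hp, mem_sphere_zero_iff_norm]
    exact norm_smul_inv_norm (hg0 p hp)
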